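/- arXiv:2312.12709 — 2 statements merged into one kernel-verified Lean document; each statement's English description precedes it below -/
import Mathlib

section
/- Let φ: K → M be a strong covering of finite simplicial complexes such that w_K(F̄)/w_K(F) = w_M(φ(F̄))/w_M(φ(F)) for every incidence F ∈ ∂F̄. If f is in the kernel of the i-up Laplace operator of M, then the lifted cochain f̄, defined by f̄([F]) = f([φ(F)]) · sgn([F], [φ(F)]), is in the kernel of the i-up Laplace operator of K. -/
open Finset

variable {V : Type*} {W : Type*}

/-- An abstract simplicial complex: a collection of finite subsets of `V`
closed under taking subsets. -/
def IsComplex [DecidableEq V] (K : Finset (Finset V)) : Prop :=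
  ∀ F ∈ K, ∀ G, G ⊆ F → G ∈ K

/-- The 1-skeleton graph of a complex. -/
def oneSkeleton [DecidableEq V] (K : Finset (Finset V)) : SimpleGraph V where
  Adj u v := u ≠ v ∧ ({u, v} : Finset V) ∈ K
  symm := ⟨fun u v h => ⟨h.1.symm, by rw [Finset.pair_comm]; exact h.2⟩⟩
  loopless := ⟨fun u h => h.1 rfl⟩

/-- A strong covering of simplicial complexes `φ : K → M`:
`K` is a connected complex, `φ` is simplicial, the preimage of each face of `M`
is a disjoint union of faces of `K` each mapped bijectively onto it, and
incidences lift: whenever `G ∈ ∂ Gb` in `M` and `F ∈ φ⁻¹(G)`, there is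
`Fb` of `K` with `F ∈ ∂ Fb` and `φ(Fb) = Gb`. -/
structure StrongCovering [DecidableEq V] [DecidableEq W]
    (K : Finset (Finset V)) (M : Finset (Finset W)) (φ : V → W) : Prop where
  complexK : IsComplex K
  complexM : IsComplex M
  nonemptyK : K.Nonempty
  connectedK : ∀ u v : V, {u} ∈ K → {v} ∈ K → (oneSkeleton K).Reachable u v
  simplicial : ∀ F ∈ K, F.image φ ∈ M
  injOn : ∀ F ∈ K, Set.InjOn φ (F : Set V)
  disjointFibers : ∀ F ∈ K, ∀ F' ∈ K, F.image φ = F'.image φ → F ≠ F' → Disjoint F F'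
  surjFaces : ∀ G ∈ M, ∃ F ∈ K, F.image φ = G
  strong : ∀ G ∈ M, ∀ Gb ∈ M, G ⊆ Gb → Gb.card = G.card + 1 →
    ∀ F ∈ K, F.image φ = G → ∃ Fb ∈ K, F ⊆ Fb ∧ Fb.card = F.card + 1 ∧ Fb.image φ = Gb

/-- The canonical boundary sign `sgn([F], ∂[Fb])` with respect to the
orientations induced by the linear order on the vertices: it is `(−1)^j` if `F`
is obtained from `Fb` by deleting its `j`-th smallest vertex, and `0` if
`F ∉ ∂ Fb`. -/
def sgnBd [LinearOrder V] (F Fb : Finset V) : ℝ :=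
  if F ⊆ Fb ∧ Fb.card = F.card + 1 then
    (-1 : ℝ) ^ (∑ v ∈ Fb \ F, (F.filter (· < v)).card)
  else 0

/-- The matrix of the `i`-up Laplace operator
`L_i^up = W_i⁻¹ D_iᵀ W_{i+1} D_i` of a weighted complex `K`, with rows and
columns indexed by the `i`-faces of `K`. -/
noncomputable def lapUp [Fintype V] [LinearOrder V]
    (K : Finset (Finset V)) (w : Finset V → ℝ) (i : ℕ) :
    Matrix {F : Finset V // F ∈ K ∧ F.card = i + 1}
      {F : Finset V // F ∈ K ∧ F.card = i + 1} ℝ :=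
  fun F F' => (w F.1)⁻¹ *
    ∑ Fb : {B : Finset V // B ∈ K ∧ B.card = i + 2},
      w Fb.1 * sgnBd F.1 Fb.1 * sgnBd F'.1 Fb.1

/-- The matrix of the `i`-up Laplace operator of an incidence-signed complex
`(K, s)`: `L_i^up(K,s) = W_i⁻¹ (D_i^s)ᵀ W_{i+1} D_i^s` where
`(D_i^s)_{Fb,F} = sgn([F], ∂[Fb]) s(F, Fb)`. -/
noncomputable def lapUpSigned [Fintype V] [LinearOrder V]
    (K : Finset (Finset V)) (w : Finset V → ℝ)
    (s : Finset V → Finset V → ℝ) (i : ℕ) :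
    Matrix {F : Finset V // F ∈ K ∧ F.card = i + 1}
      {F : Finset V // F ∈ K ∧ F.card = i + 1} ℝ :=
  fun F F' => (w F.1)⁻¹ *
    ∑ Fb : {B : Finset V // B ∈ K ∧ B.card = i + 2},
      w Fb.1 * (sgnBd F.1 Fb.1 * s F.1 Fb.1) * (sgnBd F'.1 Fb.1 * s F'.1 Fb.1)

/-- The matrix of the `i`-down Laplace operator
`L_i^down = D_{i-1} W_{i-1}⁻¹ D_{i-1}ᵀ W_i` of a weighted complex `K`
(the `(i-1)`-faces have cardinality `i`; for `i = 0` this is the empty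
simplex, giving the augmented/reduced version). -/
noncomputable def lapDown [Fintype V] [LinearOrder V]
    (K : Finset (Finset V)) (w : Finset V → ℝ) (i : ℕ) :
    Matrix {F : Finset V // F ∈ K ∧ F.card = i + 1}
      {F : Finset V // F ∈ K ∧ F.card = i + 1} ℝ :=
  fun F F' =>
    (∑ H : {H : Finset V // H ∈ K ∧ H.card = i},
      sgnBd H.1 F.1 * (w H.1)⁻¹ * sgnBd H.1 F'.1) * w F'.1

/-- The sign `sgn([F], [φ(F)])` comparing the canonical orientation of a face
`F` with the orientation its image `φ(F)` inherits from `φ`: it is the sign of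
the permutation sorting the `φ`-image of the sorted vertex list of `F`,
computed as the parity of the number of inversions. -/
def sgnMap {W : Type*} [LinearOrder V] [LinearOrder W] (φ : V → W) (F : Finset V) : ℝ :=
  (-1 : ℝ) ^ ((F ×ˢ F).filter fun p => p.1 < p.2 ∧ φ p.2 < φ p.1).card

section AuxLiftKernel

variable {V : Type*} {W : Type*}

lemma sgnMap_mul_self' [LinearOrder V] [LinearOrder W] (φ : V → W) (F : Finset V) :
    sgnMap φ F * sgnMap φ F = 1 := by
  rw [sgnMap, ← pow_add, ← two_mul, pow_mul]
  norm_num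

lemma sgnBd_eq_zero' [LinearOrder V] {F Fb : Finset V}
    (h : ¬(F ⊆ Fb ∧ Fb.card = F.card + 1)) : sgnBd F Fb = 0 := if_neg h

lemma inv_insert' [LinearOrder V] [LinearOrder W] (φ : V → W) (F : Finset V) (v : V)
    (hv : v ∉ F) :
    (((insert v F) ×ˢ (insert v F)).filter fun p => p.1 < p.2 ∧ φ p.2 < φ p.1).card
    = ((F ×ˢ F).filter fun p => p.1 < p.2 ∧ φ p.2 < φ p.1).card
      + (F.filter fun u => u < v ∧ φ v < φ u).card
      + (F.filter fun u => v < u ∧ φ u < φ v).card := by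
  classical
  rw [Finset.card_filter, Finset.sum_product, Finset.sum_insert hv]
  simp only [Finset.sum_insert hv]
  rw [Finset.sum_add_distrib]
  rw [Finset.card_filter, Finset.sum_product, Finset.card_filter, Finset.card_filter]
  simp [lt_irrefl]
  ring

lemma sgnBd_image' [LinearOrder V] [LinearOrder W] {φ : V → W} {F Fb : Finset V}
    (hinj : Set.InjOn φ Fb) (hsub : F ⊆ Fb) (hcard : Fb.card = F.card + 1) :
    sgnBd (F.image φ) (Fb.image φ) = sgnBd F Fb * sgnMap φ F * sgnMap φ Fb := by
  classical
  have hsd : (Fb \ F).card = 1 := by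
    rw [Finset.card_sdiff_of_subset hsub, hcard]; omega
  obtain ⟨v, hv⟩ := Finset.card_eq_one.mp hsd
  have hvF : v ∉ F := by
    have : v ∈ Fb \ F := hv ▸ Finset.mem_singleton_self v
    exact (Finset.mem_sdiff.mp this).2
  have hvFb : v ∈ Fb := by
    have : v ∈ Fb \ F := hv ▸ Finset.mem_singleton_self v
    exact (Finset.mem_sdiff.mp this).1
  have hFb : Fb = insert v F := by
    apply Finset.eq_of_subset_of_card_le
    · intro x hx
      by_cases hxF : x ∈ F
      · exact Finset.mem_insert_of_mem hxF
      · have : x ∈ Fb \ F := Finset.mem_sdiff.mpr ⟨hx, hxF⟩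
        rw [hv, Finset.mem_singleton] at this
        exact this ▸ Finset.mem_insert_self v F
    · rw [Finset.card_insert_of_notMem hvF, hcard]
  subst hFb
  have hinjF : Set.InjOn φ F := hinj.mono (by exact_mod_cast Finset.coe_subset.mpr hsub)
  have hcardG : (F.image φ).card = F.card := Finset.card_image_of_injOn hinjF
  have hcardGb : ((insert v F).image φ).card = F.card + 1 := by
    rw [Finset.card_image_of_injOn hinj, Finset.card_insert_of_notMem hvF]
  have hφv : φ v ∉ F.image φ := by
    intro h
    obtain ⟨u, hu, huv⟩ := Finset.mem_image.mp h
    have : u = v := hinj (Finset.mem_coe.mpr (Finset.mem_insert_of_mem hu))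
      (Finset.mem_coe.mpr (Finset.mem_insert_self v F)) huv
    exact hvF (this ▸ hu)
  have hGbim : (insert v F).image φ = insert (φ v) (F.image φ) := Finset.image_insert φ v F
  have h1 : sgnBd F (insert v F) =
      (-1 : ℝ) ^ (F.filter (· < v)).card := by
    rw [sgnBd, if_pos ⟨Finset.subset_insert v F, hcard⟩, hv]
    simp
  have h2 : sgnBd (F.image φ) ((insert v F).image φ) =
      (-1 : ℝ) ^ (F.filter fun u => φ u < φ v).card := by
    rw [sgnBd, if_pos ⟨Finset.image_subset_image (Finset.subset_insert v F),
      by rw [hcardGb, hcardG]⟩]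
    rw [hGbim]
    have hsd2 : insert (φ v) (F.image φ) \ F.image φ = {φ v} := by
      exact Finset.insert_sdiff_cancel hφv
    rw [hsd2, Finset.sum_singleton]
    congr 1
    rw [Finset.filter_image]
    exact Finset.card_image_of_injOn (hinjF.mono (by
      intro x hx; exact (Finset.mem_filter.mp hx).1))
  have hne : ∀ u ∈ F, φ u ≠ φ v := by
    intro u hu h
    have : u = v := hinj (Finset.mem_coe.mpr (Finset.mem_insert_of_mem hu))
      (Finset.mem_coe.mpr (Finset.mem_insert_self v F)) h
    exact hvF (this ▸ hu)
  set a := (F.filter (· < v)).card with ha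
  set b := (F.filter fun u => φ u < φ v).card with hb
  set c := (F.filter fun u => u < v ∧ φ v < φ u).card with hcdef
  set d := (F.filter fun u => v < u ∧ φ u < φ v).card with hd
  set e := (F.filter fun u => u < v ∧ φ u < φ v).card with he
  set invF := ((F ×ˢ F).filter fun p => p.1 < p.2 ∧ φ p.2 < φ p.1).card with hinvF
  have hace : a = c + e := by
    have := Finset.card_filter_add_card_filter_not
      (s := F.filter (· < v)) (p := fun u => φ v < φ u)
    rw [Finset.filter_filter, Finset.filter_filter] at this
    have h1 : F.filter (fun u => u < v ∧ φ v < φ u) =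
        F.filter (fun a => a < v ∧ φ v < φ a) := by rfl
    have h2 : F.filter (fun u => u < v ∧ φ u < φ v) =
        F.filter (fun a => a < v ∧ ¬ φ v < φ a) := by
      apply Finset.filter_congr
      intro u hu
      constructor
      · rintro ⟨h1', h2'⟩; exact ⟨h1', not_lt.mpr h2'.le⟩
      · rintro ⟨h1', h2'⟩
        exact ⟨h1', lt_of_le_of_ne (not_lt.mp h2') (hne u hu)⟩
    rw [ha, hcdef, he, h1, h2]
    omega
  have hbed : b = e + d := by
    have := Finset.card_filter_add_card_filter_not
      (s := F.filter (fun u => φ u < φ v)) (p := fun u => u < v)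
    rw [Finset.filter_filter, Finset.filter_filter] at this
    have h1 : F.filter (fun u => u < v ∧ φ u < φ v) =
        F.filter (fun a => φ a < φ v ∧ a < v) := by
      apply Finset.filter_congr; intro u hu; exact ⟨fun h => ⟨h.2, h.1⟩, fun h => ⟨h.2, h.1⟩⟩
    have h2 : F.filter (fun u => v < u ∧ φ u < φ v) =
        F.filter (fun a => φ a < φ v ∧ ¬ a < v) := by
      apply Finset.filter_congr
      intro u hu
      constructor
      · rintro ⟨h1', h2'⟩; exact ⟨h2', not_lt.mpr h1'.le⟩
      · rintro ⟨h1', h2'⟩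
        refine ⟨lt_of_le_of_ne (not_lt.mp h2') ?_, h1'⟩
        intro h; exact hvF (h ▸ hu)
    rw [hb, he, hd, h1, h2]
    omega
  rw [h1, h2, sgnMap, sgnMap, inv_insert' φ F v hvF]
  rw [← pow_add, ← pow_add]
  have hexp : a + invF + (invF + c + d) = b + 2 * (c + invF) := by omega
  rw [hexp, pow_add, pow_mul]
  norm_num

lemma image_inj_on_subsets' [DecidableEq V] [DecidableEq W] {φ : V → W} {Fb F1 F2 : Finset V}
    (hinj : Set.InjOn φ Fb) (h1 : F1 ⊆ Fb) (h2 : F2 ⊆ Fb)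
    (h : F1.image φ = F2.image φ) : F1 = F2 := by
  ext a
  constructor
  · intro ha
    have : φ a ∈ F2.image φ := h ▸ Finset.mem_image_of_mem φ ha
    obtain ⟨b, hb, hba⟩ := Finset.mem_image.mp this
    rwa [← hinj (Finset.mem_coe.mpr (h2 hb)) (Finset.mem_coe.mpr (h1 ha)) hba]
  · intro ha
    have : φ a ∈ F1.image φ := h.symm ▸ Finset.mem_image_of_mem φ ha
    obtain ⟨b, hb, hba⟩ := Finset.mem_image.mp this
    rwa [← hinj (Finset.mem_coe.mpr (h1 hb)) (Finset.mem_coe.mpr (h2 ha)) hba]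

lemma image_surj_on_subsets' [DecidableEq V] [DecidableEq W] {φ : V → W} {Fb : Finset V}
    {G' : Finset W} (hG' : G' ⊆ Fb.image φ) :
    (Fb.filter fun x => φ x ∈ G').image φ = G' := by
  ext g
  simp only [Finset.mem_image, Finset.mem_filter]
  constructor
  · rintro ⟨x, ⟨_, hx2⟩, rfl⟩; exact hx2
  · intro hg
    obtain ⟨x, hx, rfl⟩ := Finset.mem_image.mp (hG' hg)
    exact ⟨x, ⟨hx, hg⟩, rfl⟩

lemma alg_key' (wKF wKFb wMG wMGb bF bF' sF sF' sFb fG' : ℝ)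
    (hs1 : sF * sF = 1) (hs3 : sFb * sFb = 1)
    (hG : wMG ≠ 0) (hwq : wKFb * wMG = wKF * wMGb) :
    wKFb * bF * bF' * (fG' * sF') =
      (wKF * sF / wMG) * (wMGb * (bF * sF * sFb) * (bF' * sF' * sFb) * fG') := by
  rw [div_mul_eq_mul_div, eq_div_iff hG]
  linear_combination (bF * bF' * fG' * sF') * hwq
    - (wKF * wMGb * bF * bF' * fG' * sF' * (sFb * sFb)) * hs1
    - (wKF * wMGb * bF * bF' * fG' * sF') * hs3

end AuxLiftKernel

/-- for a strong covering `φ : K → M` whose weights satisfy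
`w_K(Fb)/w_K(F) = w_M(φ(Fb))/w_M(φ(F))` on incidences, the sign-twisted lift
`f̄([F]) = f([φ(F)]) sgn([F],[φ(F)])` of any cochain `f` in the kernel of
`L_i^up(M)` lies in the kernel of `L_i^up(K)`. -/
theorem lift_kernel_up_laplacian [Fintype V] [LinearOrder V]
    [Fintype W] [LinearOrder W]
    (K : Finset (Finset V)) (M : Finset (Finset W)) (φ : V → W)
    (hc : StrongCovering K M φ)
    (wK : Finset V → ℝ) (wM : Finset W → ℝ)
    (hwK : ∀ F ∈ K, 0 < wK F) (hwM : ∀ G ∈ M, 0 < wM G)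
    (hw : ∀ F ∈ K, ∀ Fb ∈ K, F ⊆ Fb → Fb.card = F.card + 1 →
      wK Fb / wK F = wM (Fb.image φ) / wM (F.image φ))
    (i : ℕ) (f : Finset W → ℝ)
    (hf : ∀ G ∈ M, G.card = i + 1 →
      (wM G)⁻¹ * ∑ Gb ∈ M.filter (fun X => X.card = i + 2),
        ∑ G' ∈ M.filter (fun X => X.card = i + 1),
          wM Gb * sgnBd G Gb * sgnBd G' Gb * f G' = 0) :
    ∀ F ∈ K, F.card = i + 1 →
      (wK F)⁻¹ * ∑ Fb ∈ K.filter (fun X => X.card = i + 2),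
        ∑ F' ∈ K.filter (fun X => X.card = i + 1),
          wK Fb * sgnBd F Fb * sgnBd F' Fb * (f (F'.image φ) * sgnMap φ F') = 0 := by
  classical
  intro F hF hFcard
  have hinjF := hc.injOn F hF
  have hGmem : F.image φ ∈ M := hc.simplicial F hF
  have hGcard : (F.image φ).card = i + 1 := by
    rw [Finset.card_image_of_injOn hinjF, hFcard]
  have hFne : F.Nonempty := Finset.card_pos.mp (by omega)
  have hwMG : (0:ℝ) < wM (F.image φ) := hwM _ hGmem
  have hwKF : (0:ℝ) < wK F := hwK F hF
  -- the full M-side double sum vanishes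
  have hT : ∑ Gb ∈ M.filter (fun X => X.card = i + 2),
      ∑ G' ∈ M.filter (fun X => X.card = i + 1),
        wM Gb * sgnBd (F.image φ) Gb * sgnBd G' Gb * f G' = 0 := by
    have h0 := hf (F.image φ) hGmem hGcard
    rcases mul_eq_zero.mp h0 with h | h
    · exact absurd h (inv_ne_zero hwMG.ne')
    · exact h
  -- the restricted M-side double sum vanishes
  have hT' : ∑ Gb ∈ (M.filter (fun X => X.card = i + 2)).filter (fun X => F.image φ ⊆ X),
      ∑ G' ∈ (M.filter (fun X => X.card = i + 1)).filter (fun X => X ⊆ Gb),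
        wM Gb * sgnBd (F.image φ) Gb * sgnBd G' Gb * f G' = 0 := by
    have s2 : ∑ Gb ∈ (M.filter (fun X => X.card = i + 2)).filter (fun X => F.image φ ⊆ X),
        ∑ G' ∈ (M.filter (fun X => X.card = i + 1)).filter (fun X => X ⊆ Gb),
          wM Gb * sgnBd (F.image φ) Gb * sgnBd G' Gb * f G'
        = ∑ Gb ∈ (M.filter (fun X => X.card = i + 2)).filter (fun X => F.image φ ⊆ X),
        ∑ G' ∈ M.filter (fun X => X.card = i + 1),
          wM Gb * sgnBd (F.image φ) Gb * sgnBd G' Gb * f G' := by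
      apply Finset.sum_congr rfl
      intro Gb _
      apply Finset.sum_filter_of_ne
      intro G' _ hne
      by_contra hsub
      apply hne
      rw [sgnBd_eq_zero' (F := G') (fun hh => hsub hh.1)]
      ring
    have s1 : ∑ Gb ∈ (M.filter (fun X => X.card = i + 2)).filter (fun X => F.image φ ⊆ X),
        ∑ G' ∈ M.filter (fun X => X.card = i + 1),
          wM Gb * sgnBd (F.image φ) Gb * sgnBd G' Gb * f G'
        = ∑ Gb ∈ M.filter (fun X => X.card = i + 2),
        ∑ G' ∈ M.filter (fun X => X.card = i + 1),
          wM Gb * sgnBd (F.image φ) Gb * sgnBd G' Gb * f G' := by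
      apply Finset.sum_filter_of_ne
      intro Gb _ hne
      by_contra hsub
      apply hne
      apply Finset.sum_eq_zero
      intro G' _
      rw [sgnBd_eq_zero' (F := F.image φ) (fun hh => hsub hh.1)]
      ring
    rw [s2, s1]
    exact hT
  -- restrict the K-side sum
  have e2 : ∑ Fb ∈ K.filter (fun X => X.card = i + 2),
        ∑ F' ∈ K.filter (fun X => X.card = i + 1),
          wK Fb * sgnBd F Fb * sgnBd F' Fb * (f (F'.image φ) * sgnMap φ F')
      = ∑ Fb ∈ (K.filter (fun X => X.card = i + 2)).filter (fun X => F ⊆ X),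
        ∑ F' ∈ (K.filter (fun X => X.card = i + 1)).filter (fun X => X ⊆ Fb),
          wK Fb * sgnBd F Fb * sgnBd F' Fb * (f (F'.image φ) * sgnMap φ F') := by
    have s1 : ∑ Fb ∈ (K.filter (fun X => X.card = i + 2)).filter (fun X => F ⊆ X),
        ∑ F' ∈ K.filter (fun X => X.card = i + 1),
          wK Fb * sgnBd F Fb * sgnBd F' Fb * (f (F'.image φ) * sgnMap φ F')
        = ∑ Fb ∈ K.filter (fun X => X.card = i + 2),
        ∑ F' ∈ K.filter (fun X => X.card = i + 1),
          wK Fb * sgnBd F Fb * sgnBd F' Fb * (f (F'.image φ) * sgnMap φ F') := by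
      apply Finset.sum_filter_of_ne
      intro Fb _ hne
      by_contra hsub
      apply hne
      apply Finset.sum_eq_zero
      intro F' _
      rw [sgnBd_eq_zero' (F := F) (fun hh => hsub hh.1)]
      ring
    rw [← s1]
    apply Finset.sum_congr rfl
    intro Fb _
    refine (Finset.sum_filter_of_ne ?_).symm
    intro F' _ hne
    by_contra hsub
    apply hne
    rw [sgnBd_eq_zero' (F := F') (fun hh => hsub hh.1)]
    ring
  -- the covering bijection
  have e3 : ∑ Fb ∈ (K.filter (fun X => X.card = i + 2)).filter (fun X => F ⊆ X),
        ∑ F' ∈ (K.filter (fun X => X.card = i + 1)).filter (fun X => X ⊆ Fb),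
          wK Fb * sgnBd F Fb * sgnBd F' Fb * (f (F'.image φ) * sgnMap φ F')
      = ∑ Gb ∈ (M.filter (fun X => X.card = i + 2)).filter (fun X => F.image φ ⊆ X),
        ∑ G' ∈ (M.filter (fun X => X.card = i + 1)).filter (fun X => X ⊆ Gb),
          (wK F * sgnMap φ F / wM (F.image φ)) *
            (wM Gb * sgnBd (F.image φ) Gb * sgnBd G' Gb * f G') := by
    refine Finset.sum_bij (fun Fb _ => Fb.image φ) ?_ ?_ ?_ ?_
    · intro Fb hFb
      simp only [Finset.mem_filter] at hFb ⊢
      obtain ⟨⟨hFbK, hFbcard⟩, hFsub⟩ := hFb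
      exact ⟨⟨hc.simplicial Fb hFbK,
        by rw [Finset.card_image_of_injOn (hc.injOn Fb hFbK)]; exact hFbcard⟩,
        Finset.image_subset_image hFsub⟩
    · intro Fb1 h1 Fb2 h2 heq
      simp only [Finset.mem_filter] at h1 h2
      by_contra hne
      have hd := hc.disjointFibers Fb1 h1.1.1 Fb2 h2.1.1 heq hne
      obtain ⟨v, hv⟩ := hFne
      exact (Finset.disjoint_left.mp hd (h1.2 hv)) (h2.2 hv)
    · intro Gb hGb
      simp only [Finset.mem_filter] at hGb
      obtain ⟨⟨hGbM, hGbcard⟩, hGsub⟩ := hGb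
      obtain ⟨Fb, hFbK, hFsub, hFbcard, hFbim⟩ :=
        hc.strong (F.image φ) hGmem Gb hGbM hGsub (by omega) F hF rfl
      exact ⟨Fb, Finset.mem_filter.mpr ⟨Finset.mem_filter.mpr ⟨hFbK, by omega⟩, hFsub⟩, hFbim⟩
    · intro Fb hFb
      simp only [Finset.mem_filter] at hFb
      obtain ⟨⟨hFbK, hFbcard⟩, hFsub⟩ := hFb
      have hinjFb := hc.injOn Fb hFbK
      refine Finset.sum_bij (fun F' _ => F'.image φ) ?_ ?_ ?_ ?_
      · intro F' hF'
        simp only [Finset.mem_filter] at hF' ⊢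
        obtain ⟨⟨hF'K, hF'card⟩, hF'sub⟩ := hF'
        exact ⟨⟨hc.simplicial F' hF'K,
          by rw [Finset.card_image_of_injOn (hc.injOn F' hF'K)]; exact hF'card⟩,
          Finset.image_subset_image hF'sub⟩
      · intro F1 h1 F2 h2 heq
        simp only [Finset.mem_filter] at h1 h2
        exact image_inj_on_subsets' hinjFb h1.2 h2.2 heq
      · intro G' hG'
        simp only [Finset.mem_filter] at hG'
        obtain ⟨⟨hG'M, hG'card⟩, hG'sub⟩ := hG'
        have him := image_surj_on_subsets' (φ := φ) hG'sub
        refine ⟨Fb.filter (fun x => φ x ∈ G'), Finset.mem_filter.mpr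
          ⟨Finset.mem_filter.mpr ⟨hc.complexK Fb hFbK _ (Finset.filter_subset _ _), ?_⟩,
            Finset.filter_subset _ _⟩, him⟩
        have hcardim : ((Fb.filter fun x => φ x ∈ G').image φ).card
            = (Fb.filter fun x => φ x ∈ G').card :=
          Finset.card_image_of_injOn (hinjFb.mono
            (by exact_mod_cast Finset.coe_subset.mpr (Finset.filter_subset _ _)))
        rw [← hcardim, him, hG'card]
      · intro F' hF'
        simp only [Finset.mem_filter] at hF'
        obtain ⟨⟨hF'K, hF'card⟩, hF'sub⟩ := hF'
        have hA1 : sgnBd (F.image φ) (Fb.image φ)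
            = sgnBd F Fb * sgnMap φ F * sgnMap φ Fb :=
          sgnBd_image' hinjFb hFsub (by omega)
        have hA2 : sgnBd (F'.image φ) (Fb.image φ)
            = sgnBd F' Fb * sgnMap φ F' * sgnMap φ Fb :=
          sgnBd_image' hinjFb hF'sub (by omega)
        have hwq : wK Fb * wM (F.image φ) = wK F * wM (Fb.image φ) := by
          have h := (div_eq_div_iff hwKF.ne' hwMG.ne').mp
            (hw F hF Fb hFbK hFsub (by omega))
          linear_combination h
        rw [hA1, hA2]
        exact alg_key' (wK F) (wK Fb) (wM (F.image φ)) (wM (Fb.image φ))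
          (sgnBd F Fb) (sgnBd F' Fb) (sgnMap φ F) (sgnMap φ F') (sgnMap φ Fb)
          (f (F'.image φ)) (sgnMap_mul_self' φ F) (sgnMap_mul_self' φ Fb) hwMG.ne' hwq
  rw [e2, e3]
  simp only [← Finset.mul_sum]
  rw [hT', mul_zero, mul_zero]
end

section
/- Let D be an m × n complex matrix decomposed as D = Σ_{g∈G} D^g over a finite abelian group G ≤ S_k of order k acting transitively on {1,...,k}, where the D^g have pairwise disjoint supports, and let D^ψ = Σ_{g∈G} D^g ⊗ P^g. Let W₁, W₂ be positive diagonal matrices of sizes n and m, and let χ_1 = 1, χ_2, ..., χ_k be the characters of G. Then the spectrum of (W₁ ⊗ I_k)⁻¹ (D^ψ)* (W₂ ⊗ I_k) D^ψ is the multiset union over j = 1, ..., k of the spectra of W₁⁻¹ (D^{χ_j})* W₂ D^{χ_j}, where D^{χ_j} := Σ_{g∈G} χ_j(g) D^g and * denotes conjugate transpose. In particular the j = 1 term recovers W₁⁻¹ D* W₂ D. -/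
open Matrix Kronecker

/-- The permutation matrix of `g ∈ S_k` (complex entries). -/
def permMat (k : ℕ) (g : Equiv.Perm (Fin k)) : Matrix (Fin k) (Fin k) ℂ :=
  fun i j => if i = g j then 1 else 0

section helpers
open Polynomial

lemma my_charpoly_similar {N : Type*} [Fintype N] [DecidableEq N]
    (A B S : Matrix N N ℂ) (hS : IsUnit S.det) (h : A * S = S * B) :
    A.charpoly = B.charpoly := by
  have key : charmatrix A * S.map C = S.map C * charmatrix B := by
    unfold charmatrix
    simp only [RingHom.mapMatrix_apply]
    rw [sub_mul, mul_sub, ← Matrix.map_mul, ← Matrix.map_mul, h]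
    congr 1
    exact (Matrix.scalar_commute X (fun r => Commute.all _ r) (S.map ⇑C)).eq
  have hdet : (S.map C).det = C S.det := by
    exact (RingHom.map_det C S).symm
  have h2 : A.charpoly * C S.det = C S.det * B.charpoly := by
    rw [Matrix.charpoly, Matrix.charpoly, ← hdet, ← Matrix.det_mul, key, Matrix.det_mul]
  have hne : (C S.det : ℂ[X]) ≠ 0 := by
    simpa using hS.ne_zero
  rw [mul_comm] at h2
  exact mul_left_cancel₀ hne h2

lemma my_charmatrix_blockDiagonal {N o : Type*} [Fintype N] [DecidableEq N] [Fintype o]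
    [DecidableEq o] (M : o → Matrix N N ℂ) :
    charmatrix (blockDiagonal M) = blockDiagonal (fun j => charmatrix (M j)) := by
  ext ⟨i, a⟩ ⟨j, b⟩
  by_cases hab : a = b
  · subst hab
    by_cases hij : i = j
    · subst hij; simp [charmatrix_apply_eq, blockDiagonal_apply]
    · rw [charmatrix_apply_ne _ _ _ (by simp [Prod.ext_iff, hij])]
      simp [blockDiagonal_apply, charmatrix_apply_ne _ _ _ hij]
  · rw [charmatrix_apply_ne _ _ _ (by simp [Prod.ext_iff, hab])]
    simp [blockDiagonal_apply, Ne.symm hab, hab]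

lemma my_charpoly_blockDiagonal {N o : Type*} [Fintype N] [DecidableEq N] [Fintype o]
    [DecidableEq o] (M : o → Matrix N N ℂ) :
    (blockDiagonal M).charpoly = ∏ j, (M j).charpoly := by
  rw [Matrix.charpoly, my_charmatrix_blockDiagonal, det_blockDiagonal]
  rfl

lemma my_sum_char_eq_zero {H : Type*} [Group H] [Fintype H] (φ : H →* ℂ)
    (h : ∃ h0, φ h0 ≠ 1) : ∑ g : H, φ g = 0 := by
  obtain ⟨h0, hh0⟩ := h
  have : φ h0 * ∑ g : H, φ g = ∑ g : H, φ g := by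
    rw [Finset.mul_sum]
    rw [← Equiv.sum_comp (Equiv.mulLeft h0) (fun g => φ g)]
    simp [_root_.map_mul]
  have h2 : (φ h0 - 1) * ∑ g : H, φ g = 0 := by ring_nf; linear_combination this
  rcases mul_eq_zero.mp h2 with h3 | h3
  · exact absurd (by linear_combination h3) hh0
  · exact h3

variable {p q o α : Type*}

lemma my_kron_one_blockDiag [DecidableEq o] (A : Matrix p q ℂ) :
    A ⊗ₖ (1 : Matrix o o ℂ) = blockDiagonal fun _ : o => A := by
  ext ⟨i, a⟩ ⟨j, b⟩
  simp [blockDiagonal_apply, one_apply, mul_ite]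

lemma my_kron_comm [Fintype p] [Fintype q] [Fintype o] [DecidableEq p] [DecidableEq q] [DecidableEq o]
    (A : Matrix p q ℂ) (T : Matrix o o ℂ) :
    (A ⊗ₖ (1 : Matrix o o ℂ)) * ((1 : Matrix q q ℂ) ⊗ₖ T)
      = ((1 : Matrix p p ℂ) ⊗ₖ T) * (A ⊗ₖ (1 : Matrix o o ℂ)) := by
  rw [← mul_kronecker_mul, ← mul_kronecker_mul, Matrix.one_mul, Matrix.mul_one, Matrix.one_mul, Matrix.mul_one]

lemma my_sum_kron_diag [Fintype α] [DecidableEq o] (B : α → Matrix p q ℂ) (c : α → o → ℂ) :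
    ∑ g : α, B g ⊗ₖ diagonal (c g) = blockDiagonal fun j : o => ∑ g : α, c g j • B g := by
  ext ⟨i, a⟩ ⟨j, b⟩
  simp only [Matrix.sum_apply, kroneckerMap_apply, blockDiagonal_apply, diagonal_apply,
    Matrix.smul_apply, smul_eq_mul]
  by_cases hab : a = b
  · subst hab
    simp [mul_comm]
  · simp [hab]

lemma my_kron_conjT {p' q' : Type*} (A : Matrix p q ℂ) (B : Matrix p' q' ℂ) :
    (A ⊗ₖ B)ᴴ = Aᴴ ⊗ₖ Bᴴ := by
  ext ⟨i, a⟩ ⟨j, b⟩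
  simp [conjTranspose_apply, kroneckerMap_apply, star_mul', mul_comm]

lemma my_permMat_conjT {k : ℕ} (g : Equiv.Perm (Fin k)) :
    (permMat k g)ᴴ = permMat k g⁻¹ := by
  ext i j
  simp only [conjTranspose_apply, permMat]
  by_cases h : j = g i
  · rw [if_pos h, if_pos (by rw [h]; simp), star_one]
  · rw [if_neg h, if_neg (fun hh => h (by rw [hh]; simp)), star_zero]

lemma my_permMat_mul {k : ℕ} (g : Equiv.Perm (Fin k)) (T : Matrix (Fin k) (Fin k) ℂ) :
    permMat k g * T = fun a b => T (g⁻¹ a) b := by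
  ext a b
  simp only [Matrix.mul_apply, permMat, ite_mul, one_mul, zero_mul]
  rw [Finset.sum_eq_single (g⁻¹ a)]
  · simp
  · intro c _ hc
    rw [if_neg]
    intro h; exact hc (by simp [h])
  · simp

lemma my_star_eq_inv {x : ℂ} {N : ℕ} (hN : N ≠ 0) (hx : x ^ N = 1) : star x = x⁻¹ := by
  have hns : Complex.normSq x = 1 := by
    have h1 : Complex.normSq x ^ N = 1 := by rw [← map_pow, hx]; simp
    have h0 : 0 ≤ Complex.normSq x := Complex.normSq_nonneg x
    by_contra h
    rcases lt_or_gt_of_ne h with hlt | hgt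
    · exact absurd h1 (ne_of_lt (pow_lt_one₀ h0 hlt hN))
    · exact absurd h1.symm (ne_of_lt (one_lt_pow₀ hgt hN))
  have hmul : x * star x = 1 := by
    have := Complex.mul_conj x
    rw [hns] at this
    simpa using this
  exact (eq_inv_of_mul_eq_one_right hmul)

end helpers

/-- let `D = Σ_{g∈G} D^g` over a regular abelian subgroup
`G ≤ S_k` of order `k`, with pairwise disjoint supports, `D^ψ = Σ_g D^g ⊗ P^g`,
and characters `χ_1 = 1, χ_2, ..., χ_k` of `G`. Then the spectrum of
`(W₁ ⊗ I_k)⁻¹ (D^ψ)* (W₂ ⊗ I_k) D^ψ` is the multiset union over `j` of the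
spectra of `W₁⁻¹ (D^{χ_j})* W₂ D^{χ_j}`, where `D^{χ_j} = Σ_g χ_j(g) D^g`
(expressed via characteristic polynomials); the `j = 1` term recovers
`W₁⁻¹ D* W₂ D`. -/
theorem abelian_covering_spectral_union {m n k : ℕ} (hk : 0 < k)
    (G : Subgroup (Equiv.Perm (Fin k))) [Fintype ↥G]
    (hab : ∀ g ∈ G, ∀ h ∈ G, g * h = h * g)
    (htr : ∀ i j : Fin k, ∃ g ∈ G, g i = j)
    (hcard : Nat.card G = k)
    (Dg : G → Matrix (Fin m) (Fin n) ℂ)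
    (hdisj : ∀ a b : G, a ≠ b → ∀ i j, Dg a i j = 0 ∨ Dg b i j = 0)
    (D : Matrix (Fin m) (Fin n) ℂ) (hD : D = ∑ g : G, Dg g)
    (w₁ : Fin n → ℝ) (w₂ : Fin m → ℝ)
    (hw₁ : ∀ i, 0 < w₁ i) (hw₂ : ∀ i, 0 < w₂ i)
    (χ : Fin k → (G → ℂ))
    (hhom : ∀ j : Fin k, ∀ a b : G, χ j (a * b) = χ j a * χ j b)
    (hone : ∀ j : Fin k, χ j 1 = 1)
    (htriv : χ ⟨0, hk⟩ = fun _ => 1)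
    (hdist : Function.Injective χ) :
    (((diagonal fun i => (w₁ i : ℂ)) ⊗ₖ (1 : Matrix (Fin k) (Fin k) ℂ))⁻¹ *
        (∑ g : G, Dg g ⊗ₖ permMat k (g : Equiv.Perm (Fin k)))ᴴ *
        ((diagonal fun i => (w₂ i : ℂ)) ⊗ₖ (1 : Matrix (Fin k) (Fin k) ℂ)) *
        (∑ g : G, Dg g ⊗ₖ permMat k (g : Equiv.Perm (Fin k)))).charpoly
      = ∏ j : Fin k,
        ((diagonal fun i => (w₁ i : ℂ))⁻¹ *
          (∑ g : G, χ j g • Dg g)ᴴ *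
          (diagonal fun i => (w₂ i : ℂ)) *
          (∑ g : G, χ j g • Dg g)).charpoly := by
  classical
  -- the regular-action equivalence
  have h0 : Fintype.card ↥G = k := by rw [← Nat.card_eq_fintype_card, hcard]
  have hfbij : Function.Bijective (fun g : ↥G => (g : Equiv.Perm (Fin k)) ⟨0, hk⟩) := by
    rw [Fintype.bijective_iff_surjective_and_card]
    refine ⟨fun i => ?_, by simp [h0]⟩
    obtain ⟨g, hg, hgi⟩ := htr ⟨0, hk⟩ i
    exact ⟨⟨g, hg⟩, hgi⟩
  set e := Equiv.ofBijective _ hfbij with he_def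
  have he : ∀ g : ↥G, (g : Equiv.Perm (Fin k)) ⟨0, hk⟩ = e g := fun g => rfl
  have hesymm : ∀ (g : ↥G) (a : Fin k),
      e.symm ((g : Equiv.Perm (Fin k)) a) = g * e.symm a := by
    intro g a
    apply e.injective
    rw [Equiv.apply_symm_apply]
    rw [← he]
    have h1 : ((e.symm a : ↥G) : Equiv.Perm (Fin k)) ⟨0, hk⟩ = a := by
      rw [he, Equiv.apply_symm_apply]
    simp [h1]
  -- character monoid homs
  set ψ : Fin k → (↥G →* ℂ) := fun j => ⟨⟨χ j, hone j⟩, fun a b => hhom j a b⟩ with hψ_def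
  have hψ : ∀ j g, ψ j g = χ j g := fun _ _ => rfl
  have hinv1 : ∀ (j) (g : ↥G), χ j g * χ j g⁻¹ = 1 := by
    intro j g; rw [← hhom, mul_inv_cancel, hone]
  have hne0 : ∀ (j) (g : ↥G), χ j g ≠ 0 := by
    intro j g h
    have := hinv1 j g
    rw [h, zero_mul] at this
    exact zero_ne_one this
  have hstar : ∀ (j) (g : ↥G), star (χ j g) = χ j g⁻¹ := by
    intro j g
    have hpow : χ j g ^ orderOf g = 1 := by
      rw [← hψ, ← map_pow, pow_orderOf_eq_one, hψ, hone]
    have h1 : star (χ j g) = (χ j g)⁻¹ := my_star_eq_inv (orderOf_pos g).ne' hpow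
    rw [h1]
    exact (eq_inv_of_mul_eq_one_right (hinv1 j g)).symm
  -- the diagonalizing matrix
  set T : Matrix (Fin k) (Fin k) ℂ := fun i b => χ b (e.symm i)⁻¹ with hT_def
  have permPT : ∀ g : ↥G,
      permMat k (g : Equiv.Perm (Fin k)) * T = T * diagonal (fun b => χ b g) := by
    intro g
    rw [my_permMat_mul]
    ext a b
    have hcoe : ((g : Equiv.Perm (Fin k)))⁻¹ a = ((g⁻¹ : ↥G) : Equiv.Perm (Fin k)) a := by
      simp
    show T (((g : Equiv.Perm (Fin k)))⁻¹ a) b = _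
    rw [hcoe]
    rw [Matrix.mul_apply]
    rw [Finset.sum_eq_single b (fun c _ hc => by rw [diagonal_apply_ne _ hc, mul_zero]) (by simp)]
    rw [diagonal_apply_eq]
    show χ b (e.symm (((g⁻¹ : ↥G) : Equiv.Perm (Fin k)) a))⁻¹ = χ b (e.symm a)⁻¹ * χ b g
    rw [hesymm, _root_.mul_inv_rev, hhom, inv_inv]
  -- orthogonality and invertibility of T
  have horth : Tᴴ * T = (k : ℂ) • 1 := by
    ext b c
    rw [Matrix.mul_apply]
    have hsum : ∑ i, Tᴴ b i * T i c = ∑ g : ↥G, χ b g * χ c g⁻¹ := by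
      rw [← Equiv.sum_comp e.symm (fun g : ↥G => χ b g * χ c g⁻¹)]
      refine Finset.sum_congr rfl fun i _ => ?_
      rw [conjTranspose_apply]
      show star (χ b (e.symm i)⁻¹) * χ c (e.symm i)⁻¹ = _
      rw [hstar, inv_inv]
    rw [hsum]
    by_cases hbc : b = c
    · subst hbc
      simp only [hinv1]
      simp [Finset.card_univ, h0, Matrix.smul_apply, Matrix.one_apply]
    · have hphi : ∃ g0 : ↥G, χ b g0 * χ c g0⁻¹ ≠ 1 := by
        have hne : χ b ≠ χ c := fun h => hbc (hdist h)
        obtain ⟨g0, hg0⟩ := Function.ne_iff.mp hne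
        refine ⟨g0, fun h => hg0 ?_⟩
        have h2 := congrArg (· * χ c g0) h
        simp only [one_mul] at h2
        rw [mul_assoc, mul_comm (χ c g0⁻¹), hinv1, mul_one] at h2
        exact h2
      have := my_sum_char_eq_zero
        ⟨⟨fun g : ↥G => χ b g * χ c g⁻¹, by show χ b 1 * χ c 1⁻¹ = 1; rw [inv_one, hone, hone, mul_one]⟩,
          fun x y => by
            show χ b (x*y) * χ c (x*y)⁻¹ = (χ b x * χ c x⁻¹) * (χ b y * χ c y⁻¹)
            rw [_root_.mul_inv_rev, hhom, hhom]
            ring⟩ hphi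
      rw [show (∑ g : ↥G, χ b g * χ c g⁻¹) = 0 from this]
      simp [Matrix.smul_apply, Matrix.one_apply, hbc]
  have hk0 : (k : ℂ) ≠ 0 := Nat.cast_ne_zero.mpr hk.ne'
  have hTinv : Invertible T := by
    apply invertibleOfLeftInverse _ ((k : ℂ)⁻¹ • Tᴴ)
    rw [Matrix.smul_mul, horth, smul_smul, inv_mul_cancel₀ hk0, one_smul]
  -- notation
  set W1 : Matrix (Fin n) (Fin n) ℂ := diagonal fun i => (w₁ i : ℂ) with hW1
  set W2 : Matrix (Fin m) (Fin m) ℂ := diagonal fun i => (w₂ i : ℂ) with hW2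
  set A : Fin k → Matrix (Fin m) (Fin n) ℂ := fun j => ∑ g : ↥G, χ j g • Dg g with hA
  set Dψ : Matrix (Fin m × Fin k) (Fin n × Fin k) ℂ :=
    ∑ g : ↥G, Dg g ⊗ₖ permMat k (g : Equiv.Perm (Fin k)) with hDψ
  set S : Matrix (Fin n × Fin k) (Fin n × Fin k) ℂ := (1 : Matrix (Fin n) (Fin n) ℂ) ⊗ₖ T
    with hS
  set S' : Matrix (Fin m × Fin k) (Fin m × Fin k) ℂ := (1 : Matrix (Fin m) (Fin m) ℂ) ⊗ₖ T
    with hS'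
  -- conjugating Dψ
  have hDψS : Dψ * S = S' * blockDiagonal (fun j => A j) := by
    rw [hDψ, hS, Matrix.sum_mul]
    have h1 : ∀ g : ↥G, (Dg g ⊗ₖ permMat k (g : Equiv.Perm (Fin k))) *
        ((1 : Matrix (Fin n) (Fin n) ℂ) ⊗ₖ T)
        = S' * (Dg g ⊗ₖ diagonal (fun b => χ b g)) := by
      intro g
      rw [← Matrix.mul_kronecker_mul, Matrix.mul_one, permPT, hS',
        ← Matrix.mul_kronecker_mul, Matrix.one_mul]
    rw [Finset.sum_congr rfl fun g _ => h1 g, ← Matrix.mul_sum, my_sum_kron_diag]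
  -- conjugating Dψᴴ
  have hDψH : Dψᴴ = ∑ g : ↥G, (Dg g)ᴴ ⊗ₖ permMat k (((g⁻¹ : ↥G)) : Equiv.Perm (Fin k)) := by
    rw [hDψ, Matrix.conjTranspose_sum]
    refine Finset.sum_congr rfl fun g _ => ?_
    rw [my_kron_conjT, my_permMat_conjT]
    congr 1
  have hAH : ∀ j, (A j)ᴴ = ∑ g : ↥G, χ j g⁻¹ • (Dg g)ᴴ := by
    intro j
    rw [hA, Matrix.conjTranspose_sum]
    refine Finset.sum_congr rfl fun g _ => ?_
    rw [Matrix.conjTranspose_smul, hstar]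
  have hDψHS : Dψᴴ * S' = S * blockDiagonal (fun j => (A j)ᴴ) := by
    rw [hDψH, hS', Matrix.sum_mul]
    have h1 : ∀ g : ↥G, ((Dg g)ᴴ ⊗ₖ permMat k (((g⁻¹ : ↥G)) : Equiv.Perm (Fin k))) *
        ((1 : Matrix (Fin m) (Fin m) ℂ) ⊗ₖ T)
        = S * ((Dg g)ᴴ ⊗ₖ diagonal (fun b => χ b g⁻¹)) := by
      intro g
      rw [← Matrix.mul_kronecker_mul, Matrix.mul_one, permPT, hS,
        ← Matrix.mul_kronecker_mul, Matrix.one_mul]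
    rw [Finset.sum_congr rfl fun g _ => h1 g, ← Matrix.mul_sum, my_sum_kron_diag]
    exact congrArg _ (congrArg _ (funext fun j => (hAH j).symm))
  -- commutation of diagonal blocks with S
  have hcomm1 : ∀ X : Matrix (Fin n × Fin k) (Fin n × Fin k) ℂ, (W1⁻¹ ⊗ₖ (1 : Matrix (Fin k) (Fin k) ℂ)) * (S * X) =
      S * ((W1⁻¹ ⊗ₖ (1 : Matrix (Fin k) (Fin k) ℂ)) * X) := by
    intro X
    rw [← Matrix.mul_assoc, hS, my_kron_comm, Matrix.mul_assoc]
  have hcomm2 : ∀ X : Matrix (Fin m × Fin k) (Fin n × Fin k) ℂ, (W2 ⊗ₖ (1 : Matrix (Fin k) (Fin k) ℂ)) * (S' * X) =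
      S' * ((W2 ⊗ₖ (1 : Matrix (Fin k) (Fin k) ℂ)) * X) := by
    intro X
    rw [← Matrix.mul_assoc, hS', my_kron_comm, Matrix.mul_assoc]
  have hDψHS' : ∀ X : Matrix (Fin m × Fin k) (Fin n × Fin k) ℂ, Dψᴴ * (S' * X) = S * (blockDiagonal (fun j => (A j)ᴴ) * X) := by
    intro X
    rw [← Matrix.mul_assoc, hDψHS, Matrix.mul_assoc]
  -- invertibility of S
  have hSdet : IsUnit S.det := by
    rw [hS, det_kronecker, det_one, one_pow, one_mul]
    exact ((Matrix.isUnit_iff_isUnit_det T).mp (isUnit_of_invertible T)).pow _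
  -- the key similarity
  set N : Matrix (Fin n × Fin k) (Fin n × Fin k) ℂ :=
    blockDiagonal (fun j => W1⁻¹ * (A j)ᴴ * W2 * A j) with hN
  have hNeq : N = (W1⁻¹ ⊗ₖ (1 : Matrix (Fin k) (Fin k) ℂ)) *
      (blockDiagonal (fun j => (A j)ᴴ) *
        ((W2 ⊗ₖ (1 : Matrix (Fin k) (Fin k) ℂ)) * blockDiagonal (fun j => A j))) := by
    conv_rhs => rw [my_kron_one_blockDiag W1⁻¹, my_kron_one_blockDiag W2,
      ← Matrix.blockDiagonal_mul, ← Matrix.blockDiagonal_mul, ← Matrix.blockDiagonal_mul]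
    rw [hN]
    refine congrArg _ (funext fun j => ?_)
    rw [Matrix.mul_assoc, Matrix.mul_assoc]
  have key : ((W1 ⊗ₖ (1 : Matrix (Fin k) (Fin k) ℂ))⁻¹ * Dψᴴ *
        (W2 ⊗ₖ (1 : Matrix (Fin k) (Fin k) ℂ)) * Dψ) * S = S * N := by
    rw [Matrix.inv_kronecker, inv_one]
    simp only [Matrix.mul_assoc]
    rw [hDψS, hcomm2, hDψHS', hcomm1, hNeq]
  have hcp := my_charpoly_similar _ N S hSdet key
  rw [hcp, hN, my_charpoly_blockDiagonal]
end
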